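/- Let (Ω, ℱ, μ) be a probability space, let S and T be standard Borel spaces, and let C : Ω → S and X : Ω → T be measurable. Let Z_n : Ω → ℝ be a sequence of random variables, let g_n : T × S → ℝ and h_n : S → ℝ be measurable, and set V_n := g_n(X, C) and W_n := h_n(C). Suppose that (i) for every x ∈ ℝ, for almost every (t, c) with respect to the law of (X, C), P(Z_n ≤ x | (X, C) = (t, c)) → Φ(x); (ii) for every x ∈ ℝ, for almost every c with respect to the law of C, P(V_n ≤ x | C = c) → Φ(x); and (iii) for every x ∈ ℝ, μ{W_n ≤ x} → Φ(x). Then Z_n + V_n + W_n converges in distribution to a normal random variable with mean 0 and variance 3; equivalently, for every x ∈ ℝ, μ{Z_n + V_n + W_n ≤ x} → Φ(x/√3) as n → ∞. -/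

import Mathlib

open MeasureTheory ProbabilityTheory Filter

/-- The cumulative distribution function of the standard normal distribution. -/
noncomputable def stdNormalCDF (x : ℝ) : ℝ :=
  ((gaussianReal 0 1) (Set.Iic x)).toReal

open Set Real
open scoped ENNReal NNReal Topology

section Helpers

lemma phi_eq_cdf : stdNormalCDF = fun x => ProbabilityTheory.cdf (gaussianReal 0 1) x := by
  funext x; rw [ProbabilityTheory.cdf_eq_real]; rfl

lemma phi_mono : Monotone stdNormalCDF := phi_eq_cdf ▸ (monotone_cdf _)

lemma phi_nonneg (x : ℝ) : 0 ≤ stdNormalCDF x := by rw [phi_eq_cdf]; exact cdf_nonneg _ x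

lemma phi_le_one (x : ℝ) : stdNormalCDF x ≤ 1 := by rw [phi_eq_cdf]; exact cdf_le_one _ x

lemma phi_tendsto_atBot : Tendsto stdNormalCDF atBot (𝓝 0) := by
  rw [phi_eq_cdf]; exact tendsto_cdf_atBot _

lemma phi_tendsto_atTop : Tendsto stdNormalCDF atTop (𝓝 1) := by
  rw [phi_eq_cdf]; exact tendsto_cdf_atTop _

lemma gaussianPDF_le_one (t : ℝ) : gaussianPDF 0 1 t ≤ 1 := by
  rw [gaussianPDF]
  refine ENNReal.ofReal_le_one.mpr ?_
  rw [gaussianPDFReal]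
  have h1 : rexp (- (t - 0)^2 / (2 * ((1:ℝ≥0):ℝ))) ≤ 1 := by
    rw [Real.exp_le_one_iff]
    have : (0:ℝ) ≤ (t - 0)^2 := sq_nonneg _
    have h2 : (0:ℝ) < 2 * ((1:ℝ≥0):ℝ) := by norm_num
    apply div_nonpos_of_nonpos_of_nonneg <;> nlinarith
  have h2 : (1:ℝ) ≤ √(2 * π * ((1:ℝ≥0):ℝ)) := by
    rw [show ((1:ℝ≥0):ℝ) = (1:ℝ) by norm_num, mul_one]
    rw [Real.one_le_sqrt]
    · nlinarith [Real.pi_gt_three]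
  have h3 : (√(2 * π * ((1:ℝ≥0):ℝ)))⁻¹ ≤ 1 := by
    rw [inv_le_one_iff₀]; right; exact h2
  have h4 : (0:ℝ) ≤ (√(2 * π * ((1:ℝ≥0):ℝ)))⁻¹ := by positivity
  calc (√(2 * π * ((1:ℝ≥0):ℝ)))⁻¹ * rexp (- (t - 0)^2 / (2 * ((1:ℝ≥0):ℝ)))
      ≤ 1 * 1 := by
        apply mul_le_mul h3 h1 (le_of_lt (Real.exp_pos _)) (by norm_num)
    _ = 1 := by norm_num

lemma gauss_Ioc_le (a b : ℝ) (hab : a ≤ b) :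
    (gaussianReal 0 1) (Set.Ioc a b) ≤ ENNReal.ofReal (b - a) := by
  rw [gaussianReal_apply _ one_ne_zero]
  calc ∫⁻ x in Set.Ioc a b, gaussianPDF 0 1 x
      ≤ ∫⁻ _ in Set.Ioc a b, 1 := lintegral_mono (fun x => gaussianPDF_le_one x)
    _ = volume (Set.Ioc a b) := by simp
    _ = ENNReal.ofReal (b - a) := by rw [Real.volume_Ioc]

lemma phi_lipschitz' (a b : ℝ) (hab : a ≤ b) :
    stdNormalCDF b - stdNormalCDF a ≤ b - a := by
  have hsplit : (gaussianReal 0 1) (Set.Iic b)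
      = (gaussianReal 0 1) (Set.Iic a) + (gaussianReal 0 1) (Set.Ioc a b) := by
    rw [← measure_union (Set.Iic_disjoint_Ioc le_rfl) measurableSet_Ioc, Set.Iic_union_Ioc_eq_Iic hab]
  have hfin : ∀ s : Set ℝ, (gaussianReal 0 1) s ≠ ∞ := fun s => measure_ne_top _ _
  rw [stdNormalCDF, stdNormalCDF, hsplit, ENNReal.toReal_add (hfin _) (hfin _)]
  have := gauss_Ioc_le a b hab
  have ht : ((gaussianReal 0 1) (Set.Ioc a b)).toReal ≤ b - a := by
    rw [← ENNReal.toReal_ofReal (sub_nonneg.mpr hab)]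
    exact ENNReal.toReal_mono (by simp) this
  linarith

lemma phi_abs_sub (a b : ℝ) : |stdNormalCDF b - stdNormalCDF a| ≤ |b - a| := by
  rcases le_total a b with h | h
  · rw [abs_of_nonneg (by linarith [phi_mono h] : (0:ℝ) ≤ _), abs_of_nonneg (by linarith)]
    exact phi_lipschitz' a b h
  · rw [abs_sub_comm, abs_sub_comm b a, abs_of_nonneg (by linarith [phi_mono h] : (0:ℝ) ≤ _),
      abs_of_nonneg (by linarith)]
    exact phi_lipschitz' b a h

lemma phi_continuous : Continuous stdNormalCDF := by
  apply LipschitzWith.continuous (K := 1)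
  intro a b
  rw [edist_dist, edist_dist, Real.dist_eq, Real.dist_eq]
  rw [ENNReal.coe_one, one_mul]
  exact ENNReal.ofReal_le_ofReal (phi_abs_sub b a)

lemma polya (F : ℕ → ℝ → ℝ) (hmono : ∀ n, Monotone (F n))
    (h0 : ∀ n y, 0 ≤ F n y) (h1 : ∀ n y, F n y ≤ 1)
    (hconv : ∀ q : ℚ, Tendsto (fun n => F n q) atTop (𝓝 (stdNormalCDF q)))
    {ε : ℝ} (hε : 0 < ε) :
    ∀ᶠ n in atTop, ∀ y : ℝ, |F n y - stdNormalCDF y| ≤ ε := by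
  set Φ := stdNormalCDF with hΦdef
  set ε4 : ℝ := ε / 4 with hε4def
  have hε4 : 0 < ε4 := by positivity
  -- lower rational point
  obtain ⟨M₁, hM₁⟩ := eventually_atBot.mp (phi_tendsto_atBot.eventually_lt_const hε4)
  obtain ⟨a, ha⟩ := exists_rat_lt M₁
  have hΦa : Φ a ≤ ε4 := le_of_lt (hM₁ _ ha.le)
  -- upper rational point
  obtain ⟨M₂, hM₂⟩ := eventually_atTop.mp (phi_tendsto_atTop.eventually_const_lt (show 1 - ε4 < 1 by linarith))
  obtain ⟨b, hb⟩ := exists_rat_gt (max M₂ (a + 1))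
  have hab : (a : ℝ) < b := by
    have := le_max_right M₂ ((a:ℝ)+1); linarith [hb]
  have habq : a < b := by exact_mod_cast hab
  have hΦb : 1 - ε4 ≤ Φ b := le_of_lt (hM₂ _ (le_of_lt (lt_of_le_of_lt (le_max_left _ _) hb)))
  -- the grid
  set k : ℕ := ⌈((b:ℝ) - a) / ε4⌉₊ with hkdef
  have hkpos : 0 < k := Nat.ceil_pos.mpr (div_pos (by linarith) hε4)
  set δ : ℚ := (b - a) / k with hδdef
  have hδpos : 0 < δ := div_pos (by exact_mod_cast sub_pos.mpr habq) (by exact_mod_cast hkpos)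
  have hδR : (0:ℝ) < (δ:ℝ) := by exact_mod_cast hδpos
  have hδle : (δ : ℝ) ≤ ε4 := by
    have hk' : ((b:ℝ) - a) / ε4 ≤ k := Nat.le_ceil _
    have hkR : (0:ℝ) < k := by exact_mod_cast hkpos
    rw [hδdef]
    push_cast
    rw [div_le_iff₀ hkR]
    calc (b:ℝ) - a = (((b:ℝ) - a) / ε4) * ε4 := by field_simp
      _ ≤ k * ε4 := by apply mul_le_mul_of_nonneg_right hk' hε4.le
      _ = ε4 * k := by ring
  set q : ℕ → ℚ := fun i => a + (i:ℚ) * δ with hqdef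
  have hq0 : q 0 = a := by simp [hqdef]
  have hqk : q k = b := by
    rw [hqdef, hδdef]
    field_simp
    ring
  have hqcast : ∀ i : ℕ, ((q i : ℚ) : ℝ) = (a:ℝ) + (i:ℝ) * (δ:ℝ) := by
    intro i; rw [hqdef]; push_cast; ring
  -- eventual closeness on the grid
  have H : ∀ᶠ n in atTop, ∀ i : Fin (k+1), |F n (q i) - Φ (q i)| ≤ ε4 := by
    rw [eventually_all]
    intro i
    obtain ⟨N, hN⟩ := Metric.tendsto_atTop.mp (hconv (q i)) ε4 hε4
    refine eventually_atTop.mpr ⟨N, fun n hn' => ?_⟩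
    have := hN n hn'
    rw [Real.dist_eq] at this
    exact this.le
  filter_upwards [H] with n hn
  intro y
  have hna : |F n a - Φ a| ≤ ε4 := by
    have := hn ⟨0, by omega⟩
    simpa [hq0] using this
  have hnb : |F n b - Φ b| ≤ ε4 := by
    have := hn ⟨k, by omega⟩
    simpa [hqk] using this
  rcases le_or_gt y (a:ℝ) with hya | hya
  · -- y ≤ a
    have h1' : F n y ≤ F n a := hmono n hya
    have h2' : Φ y ≤ Φ a := phi_mono hya
    have := abs_le.mp hna
    refine abs_le.mpr ⟨by nlinarith [h0 n y, phi_nonneg y, phi_nonneg (a:ℝ)], ?_⟩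
    nlinarith [h0 n y, phi_nonneg y, h0 n (a:ℝ)]
  rcases le_or_gt (b:ℝ) y with hyb | hyb
  · -- b ≤ y
    have h1' : F n b ≤ F n y := hmono n hyb
    have h2' : Φ b ≤ Φ y := phi_mono hyb
    have := abs_le.mp hnb
    refine abs_le.mpr ⟨?_, ?_⟩
    · nlinarith [h1 n y, phi_le_one y, h1 n (b:ℝ)]
    · nlinarith [h1 n y, phi_le_one y, phi_le_one (b:ℝ)]
  -- a < y < b
  set i : ℕ := ⌊((y - ↑a) / ↑δ : ℝ)⌋₊ with hidef
  have hynn : (0:ℝ) ≤ (y - ↑a) / ↑δ := div_nonneg (by linarith) hδR.le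
  have hkδ : (k:ℝ) * (δ:ℝ) = (b:ℝ) - a := by
    rw [hδdef]
    push_cast
    have : ((k:ℚ):ℝ) ≠ 0 := by exact_mod_cast (Nat.cast_ne_zero (R := ℚ)).mpr hkpos.ne'
    field_simp
  have hile : (i:ℝ) ≤ (y - ↑a) / ↑δ := Nat.floor_le hynn
  have hfl : ((y:ℝ) - ↑a) / ↑δ < (i:ℝ) + 1 := Nat.lt_floor_add_one _
  have h2 : ((y:ℝ) - ↑a) / ↑δ < (k:ℝ) := by
    rw [div_lt_iff₀ hδR]
    linarith [hkδ, hyb]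
  have hilt : i < k := by exact_mod_cast lt_of_le_of_lt hile h2
  have hlow : ((q i : ℚ) : ℝ) ≤ y := by
    rw [hqcast]
    have : (i:ℝ) * δ ≤ y - ↑a := by
      rw [← le_div_iff₀ hδR] at *
      linarith [hile]
    linarith
  have hhigh : y ≤ ((q (i+1) : ℚ) : ℝ) := by
    rw [hqcast]
    push_cast
    have : y - ↑a < ((i:ℝ) + 1) * δ := by
      rw [← div_lt_iff₀ hδR]
      exact hfl
    linarith
  have hgap : ((q (i+1) : ℚ) : ℝ) - ((q i : ℚ) : ℝ) = (δ:ℝ) := by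
    rw [hqcast, hqcast]; push_cast; ring
  have est1 := hn ⟨i, by omega⟩
  have est2 := hn ⟨i + 1, by omega⟩
  simp only [Fin.val_mk] at est1 est2 -- maybe unnecessary
  have hL1 : Φ ((q (i+1) : ℚ) : ℝ) ≤ Φ y + (δ:ℝ) := by
    have := phi_lipschitz' y ((q (i+1) : ℚ) : ℝ) hhigh
    have h3 : ((q (i+1) : ℚ) : ℝ) - y ≤ (δ:ℝ) := by linarith [hgap, hlow]
    linarith
  have hL2 : Φ y - (δ:ℝ) ≤ Φ ((q i : ℚ) : ℝ) := by
    have := phi_lipschitz' ((q i : ℚ) : ℝ) y hlow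
    have h3 : y - ((q i : ℚ) : ℝ) ≤ (δ:ℝ) := by linarith [hgap, hhigh]
    linarith
  have hu : F n y ≤ F n ((q (i+1) : ℚ) : ℝ) := hmono n hhigh
  have hl : F n ((q i : ℚ) : ℝ) ≤ F n y := hmono n hlow
  have e1 := abs_le.mp est1
  have e2 := abs_le.mp est2
  refine abs_le.mpr ⟨?_, ?_⟩
  · have : Φ ((q i : ℚ) : ℝ) - ε4 ≤ F n y := by linarith [e1.1]
    linarith [hL2, hδle]
  · have : F n y ≤ Φ ((q (i+1) : ℚ) : ℝ) + ε4 := by linarith [e2.2]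
    linarith [hL1, hδle]

noncomputable def errF (F : ℝ → ℝ) : ℝ≥0∞ :=
  ⨆ q : ℚ, ENNReal.ofReal |F q - stdNormalCDF q|

lemma errF_le_one (F : ℝ → ℝ) (h0 : ∀ y, 0 ≤ F y) (h1 : ∀ y, F y ≤ 1) : errF F ≤ 1 := by
  refine iSup_le fun q => ?_
  rw [show (1:ℝ≥0∞) = ENNReal.ofReal 1 by simp]
  refine ENNReal.ofReal_le_ofReal (abs_le.mpr ⟨?_, ?_⟩)
  · linarith [phi_le_one (q:ℝ), h0 (q:ℝ)]
  · linarith [phi_nonneg (q:ℝ), h1 (q:ℝ)]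

lemma errF_ne_top (F : ℝ → ℝ) (h0 : ∀ y, 0 ≤ F y) (h1 : ∀ y, F y ≤ 1) : errF F ≠ ∞ :=
  fun h => by simpa [h] using errF_le_one F h0 h1

lemma errF_bound (F : ℝ → ℝ) (hmono : Monotone F) (h0 : ∀ y, 0 ≤ F y) (h1 : ∀ y, F y ≤ 1)
    (y : ℝ) : |F y - stdNormalCDF y| ≤ (errF F).toReal := by
  have hfin := errF_ne_top F h0 h1
  have hterm : ∀ q : ℚ, |F q - stdNormalCDF q| ≤ (errF F).toReal := by
    intro q
    rw [← ENNReal.toReal_ofReal (abs_nonneg (F q - stdNormalCDF q))]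
    exact ENNReal.toReal_mono hfin (le_iSup (fun q : ℚ => ENNReal.ofReal |F q - stdNormalCDF q|) q)
  refine le_of_forall_pos_le_add fun ε hε => ?_
  obtain ⟨q₂, hq₂⟩ := exists_rat_btwn (show y < y + ε by linarith)
  obtain ⟨q₁, hq₁⟩ := exists_rat_btwn (show y - ε < y by linarith)
  have h2 := hterm q₂
  have h3 := hterm q₁
  have e2 := abs_le.mp h2
  have e3 := abs_le.mp h3
  have hm2 : F y ≤ F q₂ := hmono hq₂.1.le
  have hm3 : F q₁ ≤ F y := hmono hq₁.2.le
  have hp2 := phi_lipschitz' y q₂ hq₂.1.le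
  have hp3 := phi_lipschitz' q₁ y hq₁.2.le
  refine abs_le.mpr ⟨?_, ?_⟩ <;> [skip; skip]
  · -- lower: -(E + ε) ≤ F y - Φ y
    nlinarith [hq₁.1, hq₁.2]
  · nlinarith [hq₂.1, hq₂.2]

lemma errF_tendsto (F : ℕ → ℝ → ℝ) (hmono : ∀ n, Monotone (F n))
    (h0 : ∀ n y, 0 ≤ F n y) (h1 : ∀ n y, F n y ≤ 1)
    (hconv : ∀ q : ℚ, Tendsto (fun n => F n q) atTop (𝓝 (stdNormalCDF q))) :
    Tendsto (fun n => errF (F n)) atTop (𝓝 0) := by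
  rw [ENNReal.tendsto_atTop_zero]
  intro ε hε
  set ε' : ℝ := (min 1 ε).toReal with hε'def
  have hmin_ne : min 1 ε ≠ ∞ := by
    simp [lt_of_le_of_lt (min_le_left _ _) (by norm_num : (1:ℝ≥0∞) < ∞)]
  have hε' : 0 < ε' := by
    rw [hε'def]
    apply ENNReal.toReal_pos _ hmin_ne
    intro hcon
    rw [min_eq_iff] at hcon
    rcases hcon with h | h
    · exact one_ne_zero h.1
    · exact hε.ne' h.1
  obtain ⟨N, hN⟩ := eventually_atTop.mp (polya F hmono h0 h1 hconv hε')
  refine ⟨N, fun n hn => ?_⟩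
  have : errF (F n) ≤ ENNReal.ofReal ε' := by
    refine iSup_le fun q => ENNReal.ofReal_le_ofReal (hN n hn q)
  refine this.trans ?_
  rw [hε'def, ENNReal.ofReal_toReal hmin_ne]
  exact min_le_right _ _

lemma step_A {α β : Type*} [MeasurableSpace α] [MeasurableSpace β]
    (μ : Measure α) [IsProbabilityMeasure μ] (W : α → β) (hW : Measurable W)
    (Y : α → ℝ) (hY : Measurable Y) (f : β → ℝ) (hf : Measurable f) :
    (μ {a | Y a ≤ f (W a)}).toReal
      = ∫ b, ((condDistrib Y W μ) b (Set.Iic (f b))).toReal ∂(μ.map W) := by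
  have hA : MeasurableSet {p : β × ℝ | p.2 ≤ f p.1} :=
    measurableSet_le measurable_snd (hf.comp measurable_fst)
  set κ := condDistrib Y W μ with hκdef
  have hjoint : μ.map (fun a => (W a, Y a)) = (μ.map W) ⊗ₘ κ := by
    rw [hκdef, compProd_map_condDistrib hY.aemeasurable]
  have h1 : μ {a | Y a ≤ f (W a)} = ((μ.map W) ⊗ₘ κ) {p : β × ℝ | p.2 ≤ f p.1} := by
    rw [← hjoint, Measure.map_apply (hW.prodMk hY) hA]
    rfl
  have h2 : ((μ.map W) ⊗ₘ κ) {p : β × ℝ | p.2 ≤ f p.1}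
      = ∫⁻ b, κ b (Set.Iic (f b)) ∂(μ.map W) := by
    rw [Measure.compProd_apply hA]
    congr 1
  rw [h1, h2]
  rw [integral_toReal]
  · exact (Kernel.measurable_kernel_prodMk_left (κ := κ) hA).aemeasurable
  · exact ae_of_all _ fun b => lt_of_le_of_lt prob_le_one (by norm_num)

lemma step_D {α : Type*} [MeasurableSpace α] (μ : Measure α) [IsProbabilityMeasure μ]
    (u : α → ℝ) (hu : Measurable u) (x : ℝ) :
    ∫ a, stdNormalCDF (x - u a) ∂μ
      = ∫ z, (μ {a | u a ≤ x - z}).toReal ∂(gaussianReal 0 1) := by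
  have hset : MeasurableSet {p : α × ℝ | u p.1 + p.2 ≤ x} :=
    measurableSet_le ((hu.comp measurable_fst).add measurable_snd) measurable_const
  have hgm : AEMeasurable (fun a => (gaussianReal 0 1) (Set.Iic (x - u a))) μ := by
    have heq : (fun a => (gaussianReal 0 1) (Set.Iic (x - u a)))
        = fun a => ENNReal.ofReal (stdNormalCDF (x - u a)) := by
      funext a
      rw [stdNormalCDF, ENNReal.ofReal_toReal (measure_ne_top _ _)]
    rw [heq]
    exact (ENNReal.measurable_ofReal.comp
      (phi_continuous.measurable.comp (measurable_const.sub hu))).aemeasurable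
  have hL : ∫ a, stdNormalCDF (x - u a) ∂μ
      = (∫⁻ a, (gaussianReal 0 1) (Set.Iic (x - u a)) ∂μ).toReal :=
    integral_toReal hgm (ae_of_all _ fun a => lt_of_le_of_lt prob_le_one (by norm_num))
  have h2 : ∫⁻ a, (gaussianReal 0 1) (Set.Iic (x - u a)) ∂μ
      = (μ.prod (gaussianReal 0 1)) {p : α × ℝ | u p.1 + p.2 ≤ x} := by
    rw [Measure.prod_apply hset]
    congr 1
    funext a
    congr 1
    ext z
    simp only [Set.mem_preimage, Set.mem_setOf_eq, Set.mem_Iic]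
    constructor <;> intro h <;> linarith
  have h3 : (μ.prod (gaussianReal 0 1)) {p : α × ℝ | u p.1 + p.2 ≤ x}
      = ∫⁻ z, μ {a | u a ≤ x - z} ∂(gaussianReal 0 1) := by
    rw [Measure.prod_apply_symm hset]
    congr 1
    funext z
    congr 1
    ext a
    simp only [Set.mem_preimage, Set.mem_setOf_eq]
    constructor <;> intro h <;> linarith
  have hanti : Antitone (fun z => μ {a | u a ≤ x - z}) := by
    intro z₁ z₂ hz
    refine measure_mono fun a ha => ?_
    simp only [Set.mem_setOf_eq] at ha ⊢
    linarith
  rw [hL, h2, h3, integral_toReal (hanti.measurable).aemeasurable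
    (ae_of_all _ fun z => lt_of_le_of_lt prob_le_one (by norm_num))]

lemma gauss_pdf_mul (v w : ℝ≥0) (hv : v ≠ 0) (hw : w ≠ 0) (t z : ℝ) :
    gaussianPDFReal 0 v (t - z) * gaussianPDFReal 0 w z
      = gaussianPDFReal 0 (v + w) t
        * gaussianPDFReal ((w : ℝ) * t / ((v : ℝ) + (w : ℝ))) (v * w / (v + w)) z := by
  have hv' : (0:ℝ) < v := lt_of_le_of_ne v.coe_nonneg (by exact_mod_cast hv.symm)
  have hw' : (0:ℝ) < w := lt_of_le_of_ne w.coe_nonneg (by exact_mod_cast hw.symm)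
  have hvw : (0:ℝ) < (v:ℝ) + w := by linarith
  have hcoe : ((v * w / (v + w) : ℝ≥0) : ℝ) = (v:ℝ) * w / ((v:ℝ) + w) := by
    push_cast
    ring
  have hcoe2 : (((v + w) : ℝ≥0) : ℝ) = (v:ℝ) + w := by push_cast; ring
  rw [gaussianPDFReal, gaussianPDFReal, gaussianPDFReal, gaussianPDFReal, hcoe, hcoe2]
  have hπ : (0:ℝ) < π := Real.pi_pos
  -- constants
  have hconst : (√(2 * π * v))⁻¹ * (√(2 * π * w))⁻¹
      = (√(2 * π * ((v:ℝ) + w)))⁻¹ * (√(2 * π * ((v:ℝ) * w / ((v:ℝ) + w))))⁻¹ := by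
    rw [← mul_inv, ← mul_inv, ← Real.sqrt_mul (by positivity), ← Real.sqrt_mul (by positivity)]
    congr 2
    field_simp
  -- exponents
  have hexp : rexp (- (t - z - 0)^2 / (2 * v)) * rexp (- (z - 0)^2 / (2 * w))
      = rexp (- (t - 0)^2 / (2 * ((v:ℝ) + w)))
        * rexp (- (z - (w:ℝ) * t / ((v:ℝ) + w))^2 / (2 * ((v:ℝ) * w / ((v:ℝ) + w)))) := by
    rw [← Real.exp_add, ← Real.exp_add]
    congr 1
    field_simp
    ring
  calc (√(2 * π * v))⁻¹ * rexp (- (t - z - 0)^2 / (2 * v))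
        * ((√(2 * π * w))⁻¹ * rexp (- (z - 0)^2 / (2 * w)))
      = ((√(2 * π * v))⁻¹ * (√(2 * π * w))⁻¹)
        * (rexp (- (t - z - 0)^2 / (2 * v)) * rexp (- (z - 0)^2 / (2 * w))) := by ring
    _ = ((√(2 * π * ((v:ℝ) + w)))⁻¹ * (√(2 * π * ((v:ℝ) * w / ((v:ℝ) + w))))⁻¹)
        * (rexp (- (t - 0)^2 / (2 * ((v:ℝ) + w)))
          * rexp (- (z - (w:ℝ) * t / ((v:ℝ) + w))^2 / (2 * ((v:ℝ) * w / ((v:ℝ) + w))))) := by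
        rw [hconst, hexp]
    _ = _ := by ring

lemma gauss_conv (v w : ℝ≥0) (hv : v ≠ 0) (hw : w ≠ 0) (x : ℝ) :
    ∫⁻ z, (gaussianReal 0 v) (Set.Iic (x - z)) ∂(gaussianReal 0 w)
      = (gaussianReal 0 (v + w)) (Set.Iic x) := by
  have hvw : v + w ≠ 0 := by
    intro hc
    exact hv (by simpa using (add_eq_zero.mp hc).1)
  have hv' : v * w / (v + w) ≠ 0 := by
    refine div_ne_zero (mul_ne_zero hv hw) hvw
  -- step 1 : translation
  have htrans : ∀ z : ℝ, (gaussianReal 0 v) (Set.Iic (x - z))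
      = ∫⁻ t in Set.Iic x, gaussianPDF 0 v (t - z) ∂volume := by
    intro z
    rw [gaussianReal_apply _ hv]
    have : ∫⁻ u in Set.Iic (x - z), gaussianPDF 0 v u ∂volume
        = ∫⁻ u, (Set.Iic (x - z)).indicator (gaussianPDF 0 v) u ∂volume := by
      rw [lintegral_indicator measurableSet_Iic]
    rw [this]
    have h2 : ∫⁻ t in Set.Iic x, gaussianPDF 0 v (t - z) ∂volume
        = ∫⁻ t, (Set.Iic x).indicator (fun t => gaussianPDF 0 v (t - z)) t ∂volume := by
      rw [lintegral_indicator measurableSet_Iic]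
    rw [h2]
    have h3 : ∀ t : ℝ, (Set.Iic x).indicator (fun t => gaussianPDF 0 v (t - z)) t
        = (Set.Iic (x - z)).indicator (gaussianPDF 0 v) (t - z) := by
      intro t
      by_cases ht : t ≤ x
      · rw [Set.indicator_of_mem (Set.mem_Iic.mpr ht),
          Set.indicator_of_mem (Set.mem_Iic.mpr (by linarith))]
      · rw [Set.indicator_of_notMem (fun hc => ht (Set.mem_Iic.mp hc)),
          Set.indicator_of_notMem (fun hc => ht (by have := Set.mem_Iic.mp hc; linarith))]
    simp_rw [h3]
    exact (lintegral_sub_right_eq_self ((Set.Iic (x - z)).indicator (gaussianPDF 0 v)) z).symm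
  simp_rw [htrans]
  -- step 2 : swap
  have hswap : ∫⁻ z, ∫⁻ t in Set.Iic x, gaussianPDF 0 v (t - z) ∂volume ∂(gaussianReal 0 w)
      = ∫⁻ t in Set.Iic x, ∫⁻ z, gaussianPDF 0 v (t - z) ∂(gaussianReal 0 w) ∂volume := by
    apply lintegral_lintegral_swap
    exact ((measurable_gaussianPDF 0 v).comp (measurable_snd.sub measurable_fst)).aemeasurable
  rw [hswap]
  -- step 3 : inner integral
  have hinner : ∀ t : ℝ, ∫⁻ z, gaussianPDF 0 v (t - z) ∂(gaussianReal 0 w)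
      = gaussianPDF 0 (v + w) t := by
    intro t
    rw [gaussianReal_of_var_ne_zero _ hw,
      lintegral_withDensity_eq_lintegral_mul _ (measurable_gaussianPDF 0 w)
        (g := fun z => gaussianPDF 0 v (t - z))
        ((measurable_gaussianPDF 0 v).comp (measurable_const.sub measurable_id))]
    have hpt : ∀ z : ℝ, (gaussianPDF 0 w * fun z => gaussianPDF 0 v (t - z)) z
        = gaussianPDF 0 (v + w) t
          * gaussianPDF ((w : ℝ) * t / ((v : ℝ) + (w : ℝ))) (v * w / (v + w)) z := by
      intro z
      simp only [Pi.mul_apply]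
      rw [gaussianPDF, gaussianPDF, gaussianPDF, gaussianPDF,
        ← ENNReal.ofReal_mul (gaussianPDFReal_nonneg 0 w z),
        ← ENNReal.ofReal_mul (gaussianPDFReal_nonneg 0 (v+w) t)]
      rw [mul_comm (gaussianPDFReal 0 w z)]
      rw [gauss_pdf_mul v w hv hw t z]
    simp_rw [hpt]
    rw [lintegral_const_mul _ (measurable_gaussianPDF _ _),
      lintegral_gaussianPDF_eq_one _ hv', mul_one]
  simp_rw [hinner]
  rw [← gaussianReal_apply _ hvw]

lemma gauss_conv_real (v w : ℝ≥0) (hv : v ≠ 0) (hw : w ≠ 0) (x : ℝ) :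
    ∫ z, ((gaussianReal 0 v) (Set.Iic (x - z))).toReal ∂(gaussianReal 0 w)
      = ((gaussianReal 0 (v + w)) (Set.Iic x)).toReal := by
  rw [← gauss_conv v w hv hw x]
  refine integral_toReal ?_ (ae_of_all _ fun z => lt_of_le_of_lt prob_le_one (by norm_num))
  have hanti : Antitone (fun z => (gaussianReal 0 v) (Set.Iic (x - z))) := by
    intro z₁ z₂ hz
    exact measure_mono (Set.Iic_subset_Iic.mpr (by linarith))
  exact hanti.measurable.aemeasurable


lemma gauss_three (x : ℝ) :
    (gaussianReal 0 3) (Set.Iic x) = (gaussianReal 0 1) (Set.Iic (x / Real.sqrt 3)) := by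
  have h3 : (0:ℝ) < Real.sqrt 3 := by positivity
  have hmap : ((gaussianReal 0 1).map (fun y => Real.sqrt 3 * y)) = gaussianReal 0 3 := by
    rw [show (fun y => Real.sqrt 3 * y) = (Real.sqrt 3 * ·) from rfl,
      gaussianReal_map_const_mul (Real.sqrt 3)]
    congr 1
    · simp
    · have : (⟨Real.sqrt 3 ^ 2, sq_nonneg _⟩ : ℝ≥0) = 3 := by
        ext
        push_cast
        rw [Real.sq_sqrt (by norm_num : (0:ℝ) ≤ 3)]
        norm_num
        rfl
      rw [mul_one]; exact this
  rw [← hmap, Measure.map_apply (by exact measurable_const_mul _) measurableSet_Iic]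
  congr 1
  ext y
  simp only [Set.mem_preimage, Set.mem_Iic]
  rw [mul_comm, ← le_div_iff₀ h3]

lemma integrable_of_bound {α : Type*} [MeasurableSpace α] (μ : Measure α) [IsFiniteMeasure μ]
    (f : α → ℝ) (hf : AEStronglyMeasurable f μ) (hb : ∀ a, |f a| ≤ 1) : Integrable f μ :=
  Integrable.mono' (integrable_const 1) hf
    (ae_of_all _ fun a => by simpa [Real.norm_eq_abs] using hb a)

lemma abs_integral_le_one {α : Type*} [MeasurableSpace α] (μ : Measure α) [IsProbabilityMeasure μ]
    (f : α → ℝ) (hb : ∀ a, |f a| ≤ 1) : |∫ a, f a ∂μ| ≤ 1 := by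
  have := norm_integral_le_of_norm_le_const (μ := μ) (f := f) (C := 1)
    (ae_of_all _ fun a => by simpa [Real.norm_eq_abs] using hb a)
  simpa [Real.norm_eq_abs, measure_univ] using this

lemma kernel_toReal_mono {β : Type*} [MeasurableSpace β] (κ : Kernel β ℝ) [IsMarkovKernel κ]
    (p : β) : Monotone (fun y => (κ p (Set.Iic y)).toReal) := fun y₁ y₂ hy =>
  ENNReal.toReal_mono (measure_ne_top _ _) (measure_mono (Set.Iic_subset_Iic.mpr hy))

lemma kernel_toReal_le_one {β : Type*} [MeasurableSpace β] (κ : Kernel β ℝ) [IsMarkovKernel κ]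
    (p : β) (y : ℝ) : (κ p (Set.Iic y)).toReal ≤ 1 := by
  rw [show (1:ℝ) = (1:ℝ≥0∞).toReal by simp]
  exact ENNReal.toReal_mono (by simp) prob_le_one

end Helpers

theorem stmt_10 {Ω S T : Type} [MeasurableSpace Ω]
    [MeasurableSpace S] [StandardBorelSpace S]
    [MeasurableSpace T] [StandardBorelSpace T]
    (μ : Measure Ω) [IsProbabilityMeasure μ]
    (C : Ω → S) (hC : Measurable C)
    (X : Ω → T) (hX : Measurable X)
    (Z : ℕ → Ω → ℝ) (hZ : ∀ n, Measurable (Z n))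
    (g : ℕ → T × S → ℝ) (hg : ∀ n, Measurable (g n))
    (h : ℕ → S → ℝ) (hh : ∀ n, Measurable (h n))
    (hcondZ : ∀ x : ℝ, ∀ᵐ p ∂(μ.map fun ω => (X ω, C ω)),
      Tendsto
        (fun n => ((condDistrib (Z n) (fun ω => (X ω, C ω)) μ) p (Set.Iic x)).toReal)
        atTop (nhds (stdNormalCDF x)))
    (hcondV : ∀ x : ℝ, ∀ᵐ c ∂(μ.map C),
      Tendsto
        (fun n => ((condDistrib (fun ω => g n (X ω, C ω)) C μ) c (Set.Iic x)).toReal)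
        atTop (nhds (stdNormalCDF x)))
    (hW : ∀ x : ℝ, Tendsto (fun n => (μ {ω | h n (C ω) ≤ x}).toReal) atTop
        (nhds (stdNormalCDF x))) :
    ∀ x : ℝ, Tendsto
      (fun n => (μ {ω | Z n ω + g n (X ω, C ω) + h n (C ω) ≤ x}).toReal) atTop
      (nhds (stdNormalCDF (x / Real.sqrt 3))) := by
  intro x
  classical
  have hXCm : Measurable (fun ω => (X ω, C ω)) := hX.prodMk hC
  set ν : Measure (T × S) := μ.map (fun ω => (X ω, C ω)) with hνdef
  set νC : Measure S := μ.map C with hνCdef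
  haveI : IsProbabilityMeasure ν := Measure.isProbabilityMeasure_map hXCm.aemeasurable
  haveI : IsProbabilityMeasure νC := Measure.isProbabilityMeasure_map hC.aemeasurable
  set κ : ℕ → Kernel (T × S) ℝ := fun n => condDistrib (Z n) (fun ω => (X ω, C ω)) μ with hκdef
  set κ' : ℕ → Kernel S ℝ := fun n => condDistrib (fun ω => g n (X ω, C ω)) C μ with hκ'def
  haveI hκM : ∀ n, IsMarkovKernel (κ n) := fun n => by rw [hκdef]; infer_instance
  haveI hκ'M : ∀ n, IsMarkovKernel (κ' n) := fun n => by rw [hκ'def]; infer_instance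
  set γ1 : Measure ℝ := gaussianReal 0 1 with hγ1def
  haveI : IsProbabilityMeasure γ1 := by rw [hγ1def]; infer_instance
  -- error functionals for Z
  set errZ : ℕ → (T × S) → ℝ≥0∞ :=
    fun n p => errF (fun y => ((κ n) p (Set.Iic y)).toReal) with herrZdef
  have herrZmeas : ∀ n, Measurable (errZ n) := by
    intro n
    refine Measurable.iSup fun q => Measurable.ennreal_ofReal ?_
    exact (((κ n).measurable_coe measurableSet_Iic).ennreal_toReal.sub measurable_const).abs
  have haeZ : ∀ᵐ p ∂ν, ∀ q : ℚ,
      Tendsto (fun n => ((κ n) p (Set.Iic (q:ℝ))).toReal) atTop (𝓝 (stdNormalCDF q)) :=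
    ae_all_iff.mpr fun q => hcondZ q
  have herrZ0 : ∀ᵐ p ∂ν, Tendsto (fun n => errZ n p) atTop (𝓝 0) := by
    filter_upwards [haeZ] with p hp
    exact errF_tendsto (fun n y => ((κ n) p (Set.Iic y)).toReal)
      (fun n => kernel_toReal_mono (κ n) p)
      (fun n y => ENNReal.toReal_nonneg)
      (fun n y => kernel_toReal_le_one (κ n) p y) hp
  have herrZle : ∀ n p, errZ n p ≤ 1 := fun n p =>
    errF_le_one _ (fun y => ENNReal.toReal_nonneg) (fun y => kernel_toReal_le_one (κ n) p y)
  set εZ : ℕ → ℝ := fun n => (∫⁻ p, errZ n p ∂ν).toReal with hεZdef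
  have hεZfin : ∀ n, ∫⁻ p, errZ n p ∂ν ≤ 1 := by
    intro n
    calc ∫⁻ p, errZ n p ∂ν ≤ ∫⁻ _, 1 ∂ν := lintegral_mono fun p => herrZle n p
      _ = 1 := by simp
  have hεZ0 : Tendsto εZ atTop (𝓝 0) := by
    have h0 : Tendsto (fun n => ∫⁻ p, errZ n p ∂ν) atTop (𝓝 0) := by
      have := tendsto_lintegral_of_dominated_convergence (μ := ν) (F := fun n p => errZ n p)
        (f := fun _ => 0) (fun _ => 1) (fun n => herrZmeas n)
        (fun n => ae_of_all _ fun p => herrZle n p) (by simp) herrZ0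
      simpa using this
    have := (ENNReal.tendsto_toReal (show (0:ℝ≥0∞) ≠ ⊤ by simp)).comp h0
    rw [ENNReal.toReal_zero] at this
    exact this
  -- error functionals for V
  set errV : ℕ → S → ℝ≥0∞ :=
    fun n c => errF (fun y => ((κ' n) c (Set.Iic y)).toReal) with herrVdef
  have herrVmeas : ∀ n, Measurable (errV n) := by
    intro n
    refine Measurable.iSup fun q => Measurable.ennreal_ofReal ?_
    exact (((κ' n).measurable_coe measurableSet_Iic).ennreal_toReal.sub measurable_const).abs
  have haeV : ∀ᵐ c ∂νC, ∀ q : ℚ,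
      Tendsto (fun n => ((κ' n) c (Set.Iic (q:ℝ))).toReal) atTop (𝓝 (stdNormalCDF q)) :=
    ae_all_iff.mpr fun q => hcondV q
  have herrV0 : ∀ᵐ c ∂νC, Tendsto (fun n => errV n c) atTop (𝓝 0) := by
    filter_upwards [haeV] with c hc
    exact errF_tendsto (fun n y => ((κ' n) c (Set.Iic y)).toReal)
      (fun n => kernel_toReal_mono (κ' n) c)
      (fun n y => ENNReal.toReal_nonneg)
      (fun n y => kernel_toReal_le_one (κ' n) c y) hc
  have herrVle : ∀ n c, errV n c ≤ 1 := fun n c =>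
    errF_le_one _ (fun y => ENNReal.toReal_nonneg) (fun y => kernel_toReal_le_one (κ' n) c y)
  set εV : ℕ → ℝ := fun n => (∫⁻ c, errV n c ∂νC).toReal with hεVdef
  have hεVfin : ∀ n, ∫⁻ c, errV n c ∂νC ≤ 1 := by
    intro n
    calc ∫⁻ c, errV n c ∂νC ≤ ∫⁻ _, 1 ∂νC := lintegral_mono fun c => herrVle n c
      _ = 1 := by simp
  have hεV0 : Tendsto εV atTop (𝓝 0) := by
    have h0 : Tendsto (fun n => ∫⁻ c, errV n c ∂νC) atTop (𝓝 0) := by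
      have := tendsto_lintegral_of_dominated_convergence (μ := νC) (F := fun n c => errV n c)
        (f := fun _ => 0) (fun _ => 1) (fun n => herrVmeas n)
        (fun n => ae_of_all _ fun c => herrVle n c) (by simp) herrV0
      simpa using this
    have := (ENNReal.tendsto_toReal (show (0:ℝ≥0∞) ≠ ⊤ by simp)).comp h0
    rw [ENNReal.toReal_zero] at this
    exact this
  -- step A for Z
  set fZ : ℕ → (T × S) → ℝ := fun n p => x - g n p - h n p.2 with hfZdef
  have hfZm : ∀ n, Measurable (fZ n) :=
    fun n => (measurable_const.sub (hg n)).sub ((hh n).comp measurable_snd)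
  set P : ℕ → ℝ := fun n => (μ {ω | Z n ω + g n (X ω, C ω) + h n (C ω) ≤ x}).toReal with hPdef
  have heqA : ∀ n, P n = ∫ p, ((κ n) p (Set.Iic (fZ n p))).toReal ∂ν := by
    intro n
    have hset : {ω | Z n ω + g n (X ω, C ω) + h n (C ω) ≤ x}
        = {ω | Z n ω ≤ fZ n (X ω, C ω)} := by
      ext ω
      simp only [Set.mem_setOf_eq, hfZdef]
      constructor <;> intro hω <;> linarith
    show (μ {ω | Z n ω + g n (X ω, C ω) + h n (C ω) ≤ x}).toReal = _
    rw [hset]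
    exact step_A μ (fun ω => (X ω, C ω)) hXCm (Z n) (hZ n) (fZ n) (hfZm n)
  set A : ℕ → ℝ := fun n => ∫ p, stdNormalCDF (fZ n p) ∂ν with hAdef
  have hFmeas : ∀ n, Measurable (fun p => ((κ n) p (Set.Iic (fZ n p))).toReal) := by
    intro n
    have hAset : MeasurableSet {q : (T × S) × ℝ | q.2 ≤ fZ n q.1} :=
      measurableSet_le measurable_snd ((hfZm n).comp measurable_fst)
    exact (Kernel.measurable_kernel_prodMk_left (κ := κ n) hAset).ennreal_toReal
  have hestZ : ∀ n, |P n - A n| ≤ εZ n := by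
    intro n
    have hint1 : Integrable (fun p => ((κ n) p (Set.Iic (fZ n p))).toReal) ν :=
      integrable_of_bound ν _ (hFmeas n).aestronglyMeasurable
        (fun p => abs_le.mpr ⟨le_trans (by norm_num : (-1:ℝ) ≤ 0) ENNReal.toReal_nonneg,
          kernel_toReal_le_one (κ n) p _⟩)
    have hint2 : Integrable (fun p => stdNormalCDF (fZ n p)) ν :=
      integrable_of_bound ν _
        ((phi_continuous.measurable.comp (hfZm n)).aestronglyMeasurable)
        (fun p => abs_le.mpr ⟨by linarith [phi_nonneg (fZ n p)], phi_le_one (fZ n p)⟩)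
    have hgle : ∀ᵐ p ∂ν, errZ n p < ⊤ :=
      ae_of_all _ fun p => lt_of_le_of_lt (herrZle n p) (by norm_num)
    have hgint : Integrable (fun p => (errZ n p).toReal) ν := by
      refine integrable_toReal_of_lintegral_ne_top (herrZmeas n).aemeasurable ?_
      exact ne_top_of_le_ne_top (by norm_num) (hεZfin n)
    have hptw : ∀ p, ‖((κ n) p (Set.Iic (fZ n p))).toReal - stdNormalCDF (fZ n p)‖
        ≤ (errZ n p).toReal := fun p => by
      rw [Real.norm_eq_abs]
      exact errF_bound _ (kernel_toReal_mono (κ n) p)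
        (fun y => ENNReal.toReal_nonneg) (fun y => kernel_toReal_le_one (κ n) p y) (fZ n p)
    have hnorm := norm_integral_le_of_norm_le (μ := ν)
      (f := fun p => ((κ n) p (Set.Iic (fZ n p))).toReal - stdNormalCDF (fZ n p))
      hgint (ae_of_all _ hptw)
    rw [integral_sub hint1 hint2] at hnorm
    rw [heqA n]
    have heq : ∫ p, (errZ n p).toReal ∂ν = εZ n :=
      integral_toReal (herrZmeas n).aemeasurable hgle
    rw [Real.norm_eq_abs] at hnorm
    calc |(∫ p, ((κ n) p (Set.Iic (fZ n p))).toReal ∂ν) - A n|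
        ≤ ∫ p, (errZ n p).toReal ∂ν := hnorm
      _ = εZ n := heq
  -- A as integral over Ω, then gaussian smoothing
  set u : ℕ → Ω → ℝ := fun n ω => g n (X ω, C ω) + h n (C ω) with hudef
  have hum : ∀ n, Measurable (u n) := fun n => ((hg n).comp hXCm).add ((hh n).comp hC)
  set R : ℕ → ℝ → ℝ := fun n y => (μ {ω | u n ω ≤ y}).toReal with hRdef
  have hRmono : ∀ n, Monotone (R n) := by
    intro n y₁ y₂ hy
    refine ENNReal.toReal_mono (measure_ne_top _ _) (measure_mono fun ω hω => ?_)
    simp only [Set.mem_setOf_eq] at hω ⊢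
    linarith
  have hRbd : ∀ n y, |R n y| ≤ 1 := by
    intro n y
    rw [abs_of_nonneg ENNReal.toReal_nonneg]
    rw [show (1:ℝ) = (1:ℝ≥0∞).toReal by simp]
    exact ENNReal.toReal_mono (by simp) prob_le_one
  have heqD : ∀ n, A n = ∫ z, R n (x - z) ∂γ1 := by
    intro n
    have h1 : A n = ∫ ω, stdNormalCDF (x - u n ω) ∂μ := by
      have hsm : AEStronglyMeasurable (fun p : T × S => stdNormalCDF (fZ n p))
          (μ.map (fun ω => (X ω, C ω))) :=
        (phi_continuous.measurable.comp (hfZm n)).aestronglyMeasurable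
      show ∫ p, stdNormalCDF (fZ n p) ∂(μ.map (fun ω => (X ω, C ω))) = _
      rw [integral_map hXCm.aemeasurable hsm]
      refine integral_congr_ae (ae_of_all _ fun ω => ?_)
      show stdNormalCDF (fZ n (X ω, C ω)) = stdNormalCDF (x - u n ω)
      congr 1
      show x - g n (X ω, C ω) - h n (C ω) = x - (g n (X ω, C ω) + h n (C ω))
      ring
    rw [h1, step_D μ (u n) (hum n) x]
  -- step A for V, uniform in the threshold
  set SS : ℕ → ℝ → ℝ := fun n y => ∫ c, stdNormalCDF (y - h n c) ∂νC with hSSdef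
  have heqA' : ∀ n y, R n y = ∫ c, ((κ' n) c (Set.Iic (y - h n c))).toReal ∂νC := by
    intro n y
    have hset : {ω | u n ω ≤ y} = {ω | g n (X ω, C ω) ≤ y - h n (C ω)} := by
      ext ω
      simp only [Set.mem_setOf_eq, hudef]
      constructor <;> intro hω <;> linarith
    show (μ {ω | u n ω ≤ y}).toReal = _
    rw [hset]
    exact step_A μ C hC (fun ω => g n (X ω, C ω)) ((hg n).comp hXCm)
      (fun c => y - h n c) (measurable_const.sub (hh n))
  have hestV : ∀ n y, |R n y - SS n y| ≤ εV n := by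
    intro n y
    have hF'meas : Measurable (fun c => ((κ' n) c (Set.Iic (y - h n c))).toReal) := by
      have hAset : MeasurableSet {q : S × ℝ | q.2 ≤ y - h n q.1} :=
        measurableSet_le measurable_snd ((measurable_const.sub (hh n)).comp measurable_fst)
      exact (Kernel.measurable_kernel_prodMk_left (κ := κ' n) hAset).ennreal_toReal
    have hint1 : Integrable (fun c => ((κ' n) c (Set.Iic (y - h n c))).toReal) νC :=
      integrable_of_bound νC _ hF'meas.aestronglyMeasurable
        (fun c => abs_le.mpr ⟨le_trans (by norm_num : (-1:ℝ) ≤ 0) ENNReal.toReal_nonneg,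
          kernel_toReal_le_one (κ' n) c _⟩)
    have hint2 : Integrable (fun c => stdNormalCDF (y - h n c)) νC :=
      integrable_of_bound νC _
        ((phi_continuous.measurable.comp (measurable_const.sub (hh n))).aestronglyMeasurable)
        (fun c => abs_le.mpr ⟨by linarith [phi_nonneg (y - h n c)], phi_le_one (y - h n c)⟩)
    have hgle : ∀ᵐ c ∂νC, errV n c < ⊤ :=
      ae_of_all _ fun c => lt_of_le_of_lt (herrVle n c) (by norm_num)
    have hgint : Integrable (fun c => (errV n c).toReal) νC := by
      refine integrable_toReal_of_lintegral_ne_top (herrVmeas n).aemeasurable ?_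
      exact ne_top_of_le_ne_top (by norm_num) (hεVfin n)
    have hptw : ∀ c, ‖((κ' n) c (Set.Iic (y - h n c))).toReal - stdNormalCDF (y - h n c)‖
        ≤ (errV n c).toReal := fun c => by
      rw [Real.norm_eq_abs]
      exact errF_bound _ (kernel_toReal_mono (κ' n) c)
        (fun y' => ENNReal.toReal_nonneg) (fun y' => kernel_toReal_le_one (κ' n) c y') (y - h n c)
    have hnorm := norm_integral_le_of_norm_le (μ := νC)
      (f := fun c => ((κ' n) c (Set.Iic (y - h n c))).toReal - stdNormalCDF (y - h n c))
      hgint (ae_of_all _ hptw)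
    rw [integral_sub hint1 hint2] at hnorm
    rw [heqA' n y]
    have heq : ∫ c, (errV n c).toReal ∂νC = εV n :=
      integral_toReal (herrVmeas n).aemeasurable hgle
    rw [Real.norm_eq_abs] at hnorm
    calc |(∫ c, ((κ' n) c (Set.Iic (y - h n c))).toReal ∂νC) - SS n y|
        ≤ ∫ c, (errV n c).toReal ∂νC := hnorm
      _ = εV n := heq
  -- W part
  set G : ℕ → ℝ → ℝ := fun n y => (μ {ω | h n (C ω) ≤ y}).toReal with hGdef
  have hGmono : ∀ n, Monotone (G n) := by
    intro n y₁ y₂ hy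
    refine ENNReal.toReal_mono (measure_ne_top _ _) (measure_mono fun ω hω => ?_)
    simp only [Set.mem_setOf_eq] at hω ⊢
    linarith
  have hGbd : ∀ n y, |G n y| ≤ 1 := by
    intro n y
    rw [abs_of_nonneg ENNReal.toReal_nonneg]
    rw [show (1:ℝ) = (1:ℝ≥0∞).toReal by simp]
    exact ENNReal.toReal_mono (by simp) prob_le_one
  have heqD' : ∀ n y, SS n y = ∫ w, G n (y - w) ∂γ1 := by
    intro n y
    have h1 : SS n y = ∫ ω, stdNormalCDF (y - h n (C ω)) ∂μ := by
      have hsm : AEStronglyMeasurable (fun c : S => stdNormalCDF (y - h n c)) (μ.map C) :=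
        (phi_continuous.measurable.comp (measurable_const.sub (hh n))).aestronglyMeasurable
      show ∫ c, stdNormalCDF (y - h n c) ∂(μ.map C) = _
      rw [integral_map hC.aemeasurable hsm]
    rw [h1, step_D μ (fun ω => h n (C ω)) ((hh n).comp hC) y]
  have hSSmono : ∀ n, Monotone (SS n) := by
    intro n y₁ y₂ hy
    rw [heqD' n y₁, heqD' n y₂]
    refine integral_mono ?_ ?_ ?_
    · exact integrable_of_bound γ1 _ (((hGmono n).measurable.comp
        (measurable_const.sub measurable_id)).aestronglyMeasurable) (fun w => hGbd n _)
    · exact integrable_of_bound γ1 _ (((hGmono n).measurable.comp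
        (measurable_const.sub measurable_id)).aestronglyMeasurable) (fun w => hGbd n _)
    · intro w
      exact hGmono n (by linarith)
  have hSSbd : ∀ n y, |SS n y| ≤ 1 := by
    intro n y
    exact abs_integral_le_one νC _
      (fun c => abs_le.mpr ⟨by linarith [phi_nonneg (y - h n c)], phi_le_one (y - h n c)⟩)
  -- T sequence
  set TT : ℕ → ℝ := fun n => ∫ z, SS n (x - z) ∂γ1 with hTTdef
  have hest2 : ∀ n, |A n - TT n| ≤ εV n := by
    intro n
    rw [heqD n]
    have hintR : Integrable (fun z => R n (x - z)) γ1 :=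
      integrable_of_bound γ1 _ (((hRmono n).measurable.comp
        (measurable_const.sub measurable_id)).aestronglyMeasurable) (fun z => hRbd n _)
    have hintS : Integrable (fun z => SS n (x - z)) γ1 :=
      integrable_of_bound γ1 _ (((hSSmono n).measurable.comp
        (measurable_const.sub measurable_id)).aestronglyMeasurable) (fun z => hSSbd n _)
    have hnorm := norm_integral_le_of_norm_le (μ := γ1)
      (f := fun z => R n (x - z) - SS n (x - z)) (integrable_const (εV n))
      (ae_of_all _ fun z => by rw [Real.norm_eq_abs]; exact hestV n (x - z))
    rw [integral_sub hintR hintS] at hnorm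
    rw [Real.norm_eq_abs] at hnorm
    simpa [measure_univ] using hnorm
  -- identification of the limit of TT
  have hTprod : ∀ n, TT n = ∫ p : ℝ × ℝ, G n (x - p.1 - p.2) ∂(γ1.prod γ1) := by
    intro n
    have hmeas : Measurable (fun p : ℝ × ℝ => G n (x - p.1 - p.2)) :=
      (hGmono n).measurable.comp
        ((measurable_const.sub measurable_fst).sub measurable_snd)
    have hint : Integrable (fun p : ℝ × ℝ => G n (x - p.1 - p.2)) (γ1.prod γ1) :=
      integrable_of_bound _ _ hmeas.aestronglyMeasurable (fun p => hGbd n _)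
    have hint' : Integrable (Function.uncurry fun z w => G n (x - z - w)) (γ1.prod γ1) := hint
    have hiter : ∫ z, ∫ w, G n (x - z - w) ∂γ1 ∂γ1
        = ∫ p : ℝ × ℝ, G n (x - p.1 - p.2) ∂(γ1.prod γ1) := integral_integral hint'
    calc TT n = ∫ z, ∫ w, G n (x - z - w) ∂γ1 ∂γ1 := by
          refine integral_congr_ae (ae_of_all _ fun z => ?_)
          exact heqD' n (x - z)
      _ = ∫ p : ℝ × ℝ, G n (x - p.1 - p.2) ∂(γ1.prod γ1) := hiter
  have hLmeas : Measurable (fun p : ℝ × ℝ => stdNormalCDF (x - p.1 - p.2)) :=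
    phi_continuous.measurable.comp ((measurable_const.sub measurable_fst).sub measurable_snd)
  have hLint : Integrable (fun p : ℝ × ℝ => stdNormalCDF (x - p.1 - p.2)) (γ1.prod γ1) :=
    integrable_of_bound _ _ hLmeas.aestronglyMeasurable
      (fun p => abs_le.mpr ⟨by linarith [phi_nonneg (x - p.1 - p.2)], phi_le_one _⟩)
  have hLval : ∫ p : ℝ × ℝ, stdNormalCDF (x - p.1 - p.2) ∂(γ1.prod γ1)
      = stdNormalCDF (x / Real.sqrt 3) := by
    have hLint' : Integrable (Function.uncurry fun z w => stdNormalCDF (x - z - w))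
        (γ1.prod γ1) := hLint
    have hiter : ∫ z, ∫ w, stdNormalCDF (x - z - w) ∂γ1 ∂γ1
        = ∫ p : ℝ × ℝ, stdNormalCDF (x - p.1 - p.2) ∂(γ1.prod γ1) := integral_integral hLint'
    rw [← hiter]
    have hin : ∀ z : ℝ, ∫ w, stdNormalCDF (x - z - w) ∂γ1
        = ((gaussianReal 0 2) (Set.Iic (x - z))).toReal := by
      intro z
      have := gauss_conv_real 1 1 one_ne_zero one_ne_zero (x - z)
      norm_num at this
      exact this
    calc ∫ z, ∫ w, stdNormalCDF (x - z - w) ∂γ1 ∂γ1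
        = ∫ z, ((gaussianReal 0 2) (Set.Iic (x - z))).toReal ∂γ1 :=
          integral_congr_ae (ae_of_all _ fun z => hin z)
      _ = ((gaussianReal 0 3) (Set.Iic x)).toReal := by
          have := gauss_conv_real 2 1 (by norm_num) one_ne_zero x
          norm_num at this
          exact this
      _ = stdNormalCDF (x / Real.sqrt 3) := by rw [gauss_three]; rfl
  have hTlim : Tendsto TT atTop (𝓝 (stdNormalCDF (x / Real.sqrt 3))) := by
    have hconv : Tendsto (fun n => ∫ p : ℝ × ℝ, G n (x - p.1 - p.2) ∂(γ1.prod γ1)) atTop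
        (𝓝 (∫ p : ℝ × ℝ, stdNormalCDF (x - p.1 - p.2) ∂(γ1.prod γ1))) := by
      refine tendsto_integral_of_dominated_convergence (fun _ => (1:ℝ))
        (fun n => ((hGmono n).measurable.comp
          ((measurable_const.sub measurable_fst).sub measurable_snd)).aestronglyMeasurable)
        (integrable_const 1)
        (fun n => ae_of_all _ fun p => by rw [Real.norm_eq_abs]; exact hGbd n _)
        (ae_of_all _ fun p => hW (x - p.1 - p.2))
    rw [hLval] at hconv
    exact hconv.congr fun n => (hTprod n).symm
  -- final assembly
  have hPA : Tendsto (fun n => P n - A n) atTop (𝓝 0) :=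
    squeeze_zero_norm (fun n => by rw [Real.norm_eq_abs]; exact hestZ n) hεZ0
  have hAT : Tendsto (fun n => A n - TT n) atTop (𝓝 0) :=
    squeeze_zero_norm (fun n => by rw [Real.norm_eq_abs]; exact hest2 n) hεV0
  have hfin : Tendsto (fun n => TT n + ((P n - A n) + (A n - TT n))) atTop
      (𝓝 (stdNormalCDF (x / Real.sqrt 3) + ((0:ℝ) + 0))) := hTlim.add (hPA.add hAT)
  simp only [add_zero] at hfin
  exact hfin.congr fun n => by ring
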